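/- Let (E,L) be a simple complex of oriented matroids with tope set T and signed Varchenko matrix 𝔙, and fix a linear order on E. Let e ∈ E and let Y, Y' ∈ L be nonzero covectors with Y_e = Y'_e = 0. If Q ∈ T^{Y',e}, R ∈ T^{Y,e} and Y' < Y in the componentwise order, then M^e_{Q,R} = 0. (Hence, ordering T so that the blocks T^{Y,e} are consecutive and T^{Y,e} precedes T^{Y',e} whenever Y < Y', the matrix M^e is block lower triangular with the matrices M^{Y,e} on the main diagonal.) -/
import Mathlib


open scoped Classical
open MvPolynomial

noncomputable section

abbrev SV (E : Type*) := E → SignType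

variable {E : Type*}

/-- Composition of sign vectors. -/
def scomp (X Y : SV E) : SV E := fun e => if X e = 0 then Y e else X e

/-- Separator of two sign vectors. -/
def sep (X Y : SV E) : Set E := {e | X e = -(Y e) ∧ X e ≠ 0}

/-- Zero set of a sign vector. -/
def zset (X : SV E) : Set E := {e | X e = 0}

/-- Face symmetry axiom. -/
def FSax (L : Set (SV E)) : Prop := ∀ X ∈ L, ∀ Y ∈ L, scomp X (-Y) ∈ L

/-- Strong elimination axiom. -/
def SEax (L : Set (SV E)) : Prop :=
  ∀ X ∈ L, ∀ Y ∈ L, ∀ e ∈ sep X Y,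
    ∃ Z ∈ L, Z e = 0 ∧ ∀ f ∉ sep X Y, Z f = scomp X Y f

/-- Complex of oriented matroids. -/
def IsCOM (L : Set (SV E)) : Prop := FSax L ∧ SEax L

/-- Simplicity. -/
def SimpleCOM (L : Set (SV E)) : Prop :=
  (∀ e : E, ∀ s : SignType, ∃ X ∈ L, X e = s) ∧
  (∀ e f : E, e ≠ f → ∀ s : SignType, ∃ X ∈ L, X e * X f = s)

/-- Topes: covectors of full support. -/
def Topes (L : Set (SV E)) : Set (SV E) := {X | X ∈ L ∧ ∀ e, X e ≠ 0}

/-- Componentwise order on sign vectors (0 < +, 0 < -). -/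
def covLE (X Y : SV E) : Prop := ∀ e, X e = 0 ∨ X e = Y e

def covLT (X Y : SV E) : Prop := covLE X Y ∧ X ≠ Y

def starSet (L : Set (SV E)) (X : SV E) : Set (SV E) := {T | T ∈ Topes L ∧ covLE X T}

/-- Entry of the signed Varchenko matrix. -/
def varEntry (K : Type*) [Field K] [Fintype E] (P Q : SV E) : MvPolynomial (E × Bool) K :=
  ∏ e ∈ Set.toFinset (sep P Q), X (if P e = 1 then (e, true) else (e, false))

/-- The signed Varchenko matrix, indexed by topes. -/
def varMatrix (K : Type*) [Field K] [Fintype E] (L : Set (SV E)) :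
    Matrix ↥(Topes L) ↥(Topes L) (MvPolynomial (E × Bool) K) :=
  Matrix.of fun P Q => varEntry K P.1 Q.1

/-- a(Y) = ∏_{e ∈ z(Y)} x_{e^+} x_{e^-}. -/
def aY (K : Type*) [Field K] [Fintype E] (Y : SV E) : MvPolynomial (E × Bool) K :=
  ∏ e ∈ Set.toFinset (zset Y), (X (e, true) * X (e, false))

/-- Restriction of a sign vector to a subset. -/
def restr (A : Set E) (X : SV E) : SV ↥A := fun a => X a.1

/-- `m` is the Möbius function of the relation `r` on the (finite) carrier `S`. -/
def IsMobiusOn {α : Type*} [Fintype α] (S : Set α) (r : α → α → Prop) (m : α → α → ℤ) : Prop :=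
  (∀ x ∈ S, m x x = 1) ∧
  ∀ x ∈ S, ∀ y ∈ S, r x y → x ≠ y →
    m x y = -∑ z ∈ Set.toFinset {z | z ∈ S ∧ r x z ∧ r z y ∧ z ≠ y}, m x z

/-- The carrier of the poset `T_{R,e}`: topes with `e`-coordinate `-R e`, plus
an artificial least element `none`. -/
def TReSet (L : Set (SV E)) (R : SV E) (e : E) : Set (Option (SV E)) :=
  insert none (some '' {P | P ∈ Topes L ∧ P e = -(R e)})

/-- The order of the poset `T_{R,e}` (order induced from the tope poset `T_R`,
with `none` as least element). -/
def TReRel (R : SV E) : Option (SV E) → Option (SV E) → Prop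
  | none, _ => True
  | some _, none => False
  | some P, some Q => sep R P ⊆ sep R Q

/-- `T^{Y,e}`: topes `P` such that `Y` is the maximal covector with `Y ≤ P` and `Y e = 0`. -/
def TYe (L : Set (SV E)) (Y : SV E) (e : E) : Set (SV E) :=
  {P | P ∈ Topes L ∧ covLE Y P ∧ Y e = 0 ∧
    ∀ Y' ∈ L, covLE Y' P → Y' e = 0 → covLE Y' Y}

/-- `e` is the maximal element of `S(Q,R)` w.r.t. the linear order `ord`. -/
def maxOfSep (ord : LinearOrder E) (e : E) (Q R : SV E) : Prop :=
  e ∈ sep Q R ∧ ∀ f ∈ sep Q R, ord.le f e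

/-- The matrix `M^e`. -/
def Mmat (K : Type*) [Field K] [Fintype E] (L : Set (SV E)) (ord : LinearOrder E) (e : E)
    (m : SV E → Option (SV E) → Option (SV E) → ℤ) :
    Matrix ↥(Topes L) ↥(Topes L) (MvPolynomial (E × Bool) K) :=
  Matrix.of fun Q R =>
    if Q = R then 1
    else if maxOfSep ord e Q.1 R.1 then
      (-(m R.1 none (some Q.1)) : ℤ) • varEntry K Q.1 R.1
    else 0

/-- The covector set of the cyclic oriented matroid `C_n`. -/
def cyc (E : Type*) : Set (SV E) :=
  {X | X = 0 ∨ ((∃ e, X e = 1) ∧ (∃ f, X f = -1))}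

/-- The topal fiber `ρ_{(S⁺,S⁻)}(L')`. -/
def fiber {E' : Type*} (L' : Set (SV E')) (Sp Sm : Set E') : Set (SV ↥((Sp ∪ Sm)ᶜ)) :=
  restr ((Sp ∪ Sm)ᶜ) '' {Z | Z ∈ L' ∧ (∀ e ∈ Sp, Z e = 1) ∧ (∀ e ∈ Sm, Z e = -1)}


section BlockAux

private lemma sgn_neg_inj : ∀ a b : SignType, -a = -b → a = b := by decide
private lemma sgn_eq_neg_self : ∀ a : SignType, a = -a → a = 0 := by decide
private lemma sgn_resolve : ∀ a b : SignType, a ≠ 0 → b ≠ 0 → a ≠ -b → a = b := by decide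
private lemma sgn_neg_eq_iff : ∀ a b : SignType, a = -b ↔ b = -a := by decide
private lemma sgn_negneg : ∀ a : SignType, -(-a) = a := by decide

private lemma covLE_antisymm {X Z : SV E} (h1 : covLE X Z) (h2 : covLE Z X) : X = Z := by
  funext f
  rcases h1 f with h | h
  · rcases h2 f with h' | h'
    · rw [h, h']
    · exact h'.symm
  · exact h

private lemma scomp_idem (Y P : SV E) : scomp Y (scomp Y P) = scomp Y P := by
  funext f; simp only [scomp]; by_cases h : Y f = 0 <;> simp [h]

private lemma scomp_mem {L : Set (SV E)} (hFS : FSax L) {Y P : SV E} (hY : Y ∈ L) (hP : P ∈ L) :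
    scomp Y P ∈ L := by
  have h1 := hFS Y hY P hP
  have h2 := hFS Y hY _ h1
  have he : scomp Y (-(scomp Y (-P))) = scomp Y P := by
    funext f; simp only [scomp, Pi.neg_apply]; by_cases h : Y f = 0 <;> simp [h, sgn_negneg]
  rwa [he] at h2

private lemma scomp_tope {L : Set (SV E)} (hFS : FSax L) {Y P : SV E} (hY : Y ∈ L)
    (hP : P ∈ Topes L) : scomp Y P ∈ Topes L := by
  refine ⟨scomp_mem hFS hY hP.1, fun f => ?_⟩
  simp only [scomp]
  by_cases h : Y f = 0
  · simpa [h] using hP.2 f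
  · simpa [h] using h

private lemma sep_scomp {L : Set (SV E)} {Y R : SV E} (hRT : R ∈ Topes L) (hYR : covLE Y R)
    (P : SV E) : sep R (scomp Y P) = sep R P ∩ zset Y := by
  ext f
  simp only [sep, scomp, zset, Set.mem_setOf_eq, Set.mem_inter_iff]
  by_cases h : Y f = 0
  · simp [h]
  · have hYf : Y f = R f := (hYR f).resolve_left h
    simp only [if_neg h]
    constructor
    · rintro ⟨h1, h2⟩
      rw [hYf] at h1
      exact absurd (sgn_eq_neg_self _ h1) h2
    · rintro ⟨-, h2⟩
      exact absurd h2 h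

private lemma tope_eq_of_sep_eq {L : Set (SV E)} {R P P' : SV E} (hRT : R ∈ Topes L)
    (hP : P ∈ Topes L) (hP' : P' ∈ Topes L) (h : sep R P = sep R P') : P = P' := by
  funext f
  have hf := Set.ext_iff.mp h f
  simp only [sep, Set.mem_setOf_eq] at hf
  by_cases hm : R f = -(P f)
  · have h2 : R f = -(P' f) := (hf.mp ⟨hm, hRT.2 f⟩).1
    exact sgn_neg_inj _ _ (hm.symm.trans h2)
  · have hm' : R f ≠ -(P' f) := fun hc => hm (hf.mpr ⟨hc, hRT.2 f⟩).1
    have e1 : P f = R f := sgn_resolve _ _ (hP.2 f) (hRT.2 f)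
      (fun hc => hm ((sgn_neg_eq_iff _ _).mp hc))
    have e2 : P' f = R f := sgn_resolve _ _ (hP'.2 f) (hRT.2 f)
      (fun hc => hm' ((sgn_neg_eq_iff _ _).mp hc))
    rw [e1, e2]

private lemma mobius_rec [Fintype E] [DecidableEq E] {L : Set (SV E)} {R : SV E} {e : E}
    {m : Option (SV E) → Option (SV E) → ℤ}
    (hmob : IsMobiusOn (TReSet L R e) (TReRel R) m)
    {P : SV E} (hP : P ∈ Topes L) (hPe : P e = -(R e)) :
    m none (some P) =
      -(1 + ∑ P' ∈ Set.toFinset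
          {P' : SV E | (P' ∈ Topes L ∧ P' e = -(R e)) ∧ sep R P' ⊆ sep R P ∧ P' ≠ P},
          m none (some P')) := by
  have hnone : (none : Option (SV E)) ∈ TReSet L R e := Set.mem_insert _ _
  have hsome : (some P) ∈ TReSet L R e :=
    Set.mem_insert_iff.mpr (Or.inr ⟨P, ⟨hP, hPe⟩, rfl⟩)
  have hrec := hmob.2 none hnone (some P) hsome trivial (by simp)
  have hset : ∀ inst : Fintype
        ↥{z | z ∈ TReSet L R e ∧ TReRel R none z ∧ TReRel R z (some P) ∧ z ≠ some P},
      @Set.toFinset _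
        {z | z ∈ TReSet L R e ∧ TReRel R none z ∧ TReRel R z (some P) ∧ z ≠ some P} inst
      = insert none (Finset.image some (Set.toFinset
          {P' : SV E | (P' ∈ Topes L ∧ P' e = -(R e)) ∧ sep R P' ⊆ sep R P ∧ P' ≠ P})) := by
    intro inst
    ext z
    cases z with
    | none => simp [TReSet, TReRel]
    | some P' =>
      simp only [Set.mem_toFinset, Set.mem_setOf_eq, TReSet, TReRel, Set.mem_insert_iff,
        Set.mem_image, Finset.mem_insert, Finset.mem_image, Option.some.injEq, ne_eq]
      aesop
  rw [hrec, hset _,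
    Finset.sum_insert (by simp), Finset.sum_image (fun x _ y _ h => Option.some_injective _ h),
    hmob.1 none hnone]

private lemma main_ind [Fintype E] [DecidableEq E] {L : Set (SV E)} (hFS : FSax L) {Y R : SV E} {e : E}
    (hY : Y ∈ L) (hRT : R ∈ Topes L) (hYR : covLE Y R) (hYe : Y e = 0)
    {m : Option (SV E) → Option (SV E) → ℤ}
    (hmob : IsMobiusOn (TReSet L R e) (TReRel R) m) :
    ∀ n : ℕ, ∀ P : SV E, P ∈ Topes L → P e = -(R e) → (Set.toFinset (sep R P)).card < n →
      (scomp Y P ≠ P → m none (some P) = 0) ∧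
      (scomp Y P = P →
        ∑ P' ∈ Set.toFinset {P' : SV E | (P' ∈ Topes L ∧ P' e = -(R e)) ∧
            scomp Y P' = P' ∧ sep R P' ⊆ sep R P}, m none (some P') = -1) := by
  intro n
  induction n with
  | zero => exact fun P _ _ h => absurd h (by omega)
  | succ n IH =>
    intro P hP hPe hcard
    have hrec := mobius_rec hmob hP hPe
    set F := Set.toFinset {P' : SV E | (P' ∈ Topes L ∧ P' e = -(R e)) ∧
        sep R P' ⊆ sep R P ∧ P' ≠ P} with hF
    have hssub : ∀ P' : SV E, P' ∈ Topes L → sep R P' ⊆ sep R P → P' ≠ P →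
        (Set.toFinset (sep R P')).card < (Set.toFinset (sep R P)).card := by
      intro P' hP' hsub hne
      apply Finset.card_lt_card
      rw [Finset.ssubset_iff_subset_ne]
      refine ⟨Set.toFinset_subset_toFinset.mpr hsub, fun hc => hne ?_⟩
      exact tope_eq_of_sep_eq hRT hP' hP (Set.toFinset_inj.mp hc)
    have hsplit : ∑ P' ∈ F, m none (some P')
        = ∑ P' ∈ F.filter (fun P' => scomp Y P' = P'), m none (some P') := by
      rw [← Finset.sum_filter_add_sum_filter_not F (fun P' => scomp Y P' = P')]
      have hz : ∑ P' ∈ F.filter (fun P' => ¬ scomp Y P' = P'), m none (some P') = 0 := by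
        apply Finset.sum_eq_zero
        intro P' hP'
        simp only [hF, Finset.mem_filter, Set.mem_toFinset, Set.mem_setOf_eq] at hP'
        obtain ⟨⟨⟨hP'T, hP'e⟩, hsub, hne⟩, hnfix⟩ := hP'
        exact (IH P' hP'T hP'e
          (lt_of_lt_of_le (hssub P' hP'T hsub hne) (Nat.lt_succ_iff.mp hcard))).1 hnfix
      rw [hz, add_zero]
    constructor
    · intro hne
      have hpiT : scomp Y P ∈ Topes L := scomp_tope hFS hY hP
      have hpie : scomp Y P e = -(R e) := by
        simp only [scomp, hYe, if_pos rfl]; exact hPe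
      have hpisep : sep R (scomp Y P) = sep R P ∩ zset Y := sep_scomp hRT hYR P
      have hpisub : sep R (scomp Y P) ⊆ sep R P := by
        rw [hpisep]; exact Set.inter_subset_left
      have hpicard : (Set.toFinset (sep R (scomp Y P))).card < n := by
        have := hssub _ hpiT hpisub hne
        omega
      have hb := (IH (scomp Y P) hpiT hpie hpicard).2 (scomp_idem Y P)
      have hsets : F.filter (fun P' => scomp Y P' = P')
          = Set.toFinset {P' : SV E | (P' ∈ Topes L ∧ P' e = -(R e)) ∧
              scomp Y P' = P' ∧ sep R P' ⊆ sep R (scomp Y P)} := by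
        ext P'
        simp only [hF, Finset.mem_filter, Set.mem_toFinset, Set.mem_setOf_eq]
        constructor
        · rintro ⟨⟨hc, hsub, hne'⟩, hfix⟩
          refine ⟨hc, hfix, ?_⟩
          have key : sep R P' = sep R P' ∩ zset Y := by
            rw [← sep_scomp hRT hYR P', hfix]
          rw [hpisep, key]
          exact Set.inter_subset_inter hsub subset_rfl
        · rintro ⟨hc, hfix, hsub⟩
          refine ⟨⟨hc, hsub.trans hpisub, fun hc' => hne ?_⟩, hfix⟩
          subst hc'
          exact tope_eq_of_sep_eq hRT hpiT hP (Set.Subset.antisymm hpisub hsub)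
      rw [hrec, hsplit, hsets, hb]
      ring
    · intro hfix
      set G := Set.toFinset {P' : SV E | (P' ∈ Topes L ∧ P' e = -(R e)) ∧
          scomp Y P' = P' ∧ sep R P' ⊆ sep R P} with hG
      have herase : G.erase P = F.filter (fun P' => scomp Y P' = P') := by
        ext P'
        simp only [hG, hF, Finset.mem_erase, Finset.mem_filter, Set.mem_toFinset,
          Set.mem_setOf_eq]
        tauto
      have hPG : P ∈ G := by
        rw [hG, Set.mem_toFinset]; exact ⟨⟨hP, hPe⟩, hfix, subset_rfl⟩
      rw [← Finset.add_sum_erase _ _ hPG, herase, ← hsplit, hrec]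
      ring

end BlockAux

set_option maxHeartbeats 1600000 in
/-- block triangularity of `M^e`: if `Q ∈ T^{Y',e}`, `R ∈ T^{Y,e}`
and `Y' < Y` componentwise, then the `(Q,R)` entry of `M^e` vanishes. -/
theorem Mmat_block_triangular {E : Type*} [Fintype E] [DecidableEq E] (K : Type*) [Field K]
    (L : Set (SV E)) (hCOM : IsCOM L) (hsimple : SimpleCOM L)
    (ord : LinearOrder E) (e : E)
    (Y Y' : SV E) (hY : Y ∈ L) (hY' : Y' ∈ L) (hY0 : Y ≠ 0) (hY'0 : Y' ≠ 0)
    (hYe : Y e = 0) (hY'e : Y' e = 0)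
    (Q R : SV E) (hQ : Q ∈ TYe L Y' e) (hR : R ∈ TYe L Y e)
    (hlt : covLT Y' Y)
    (m : SV E → Option (SV E) → Option (SV E) → ℤ)
    (hm : ∀ R ∈ Topes L, IsMobiusOn (TReSet L R e) (TReRel R) (m R)) :
    Mmat K L ord e m ⟨Q, hQ.1⟩ ⟨R, hR.1⟩ = 0 := by
  have hQT : Q ∈ Topes L := hQ.1
  have hRT : R ∈ Topes L := hR.1
  have hRle : covLE Y R := hR.2.1
  have hcontra : ¬ covLE Y Q := by
    intro h
    have hYY' : covLE Y Y' := hQ.2.2.2 Y hY h hYe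
    exact hlt.2 (covLE_antisymm hlt.1 hYY')
  have hQR : Q ≠ R := fun h => hcontra (h ▸ hRle)
  simp only [Mmat, Matrix.of_apply]
  rw [if_neg (fun h => hQR (congrArg Subtype.val h))]
  by_cases hmax : maxOfSep ord e Q R
  · rw [if_pos hmax]
    have hQe : Q e = -(R e) := hmax.1.1
    have hfix : scomp Y Q ≠ Q := by
      intro hfx
      apply hcontra
      intro f
      by_cases h : Y f = 0
      · exact Or.inl h
      · right
        have hq := congrFun hfx f
        simp only [scomp, if_neg h] at hq
        exact hq
    have hzero := (main_ind hCOM.1 hY hRT hRle hYe (hm R hRT)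
      ((Set.toFinset (sep R Q)).card + 1) Q hQT hQe (Nat.lt_succ_self _)).1 hfix
    rw [hzero]
    simp
  · rw [if_neg hmax]

end
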